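/- (Vanishing lemma used in the proof of Claim 5.11.) If g ∈ ℂ[X,Y,Z] is homogeneous of degree 2 and g(x,y,z) = 0 for every (x,y,z) ∈ ℂ³ with F(x,y,z) = 0, then g = 0. -/

import Mathlib

open MvPolynomial

noncomputable section

/-- `F = Y²Z − X³ − X²Z`, the equation of the nodal plane cubic
`C : Y²Z = X²(X+Z)` in `ℙ²(ℂ)`. -/
def F : MvPolynomial (Fin 3) ℂ := X 1 ^ 2 * X 2 - X 0 ^ 3 - X 0 ^ 2 * X 2

lemma degree_eq_sum3 (m : Fin 3 →₀ ℕ) : m.degree = m 0 + m 1 + m 2 := by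
  rw [Finsupp.degree_apply,
    Finset.sum_subset (Finset.subset_univ m.support)
      (fun x _ hx => Finsupp.notMem_support_iff.mp hx),
    Fin.sum_univ_three]

lemma mem_six (m : Fin 3 →₀ ℕ) (h : m.degree = 2) :
    m = Finsupp.single 0 2 ∨ m = Finsupp.single 1 2 ∨ m = Finsupp.single 2 2 ∨
    m = Finsupp.single 0 1 + Finsupp.single 1 1 ∨
    m = Finsupp.single 0 1 + Finsupp.single 2 1 ∨
    m = Finsupp.single 1 1 + Finsupp.single 2 1 := by
  rw [degree_eq_sum3] at h
  have h0 : m 0 = 2 ∧ m 1 = 0 ∧ m 2 = 0 ∨ m 0 = 0 ∧ m 1 = 2 ∧ m 2 = 0 ∨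
      m 0 = 0 ∧ m 1 = 0 ∧ m 2 = 2 ∨ m 0 = 1 ∧ m 1 = 1 ∧ m 2 = 0 ∨
      m 0 = 1 ∧ m 1 = 0 ∧ m 2 = 1 ∨ m 0 = 0 ∧ m 1 = 1 ∧ m 2 = 1 := by omega
  rcases h0 with ⟨h0, h1, h2⟩ | ⟨h0, h1, h2⟩ | ⟨h0, h1, h2⟩ | ⟨h0, h1, h2⟩ | ⟨h0, h1, h2⟩ |
    ⟨h0, h1, h2⟩
  · exact Or.inl (by ext i; fin_cases i <;> simp [Finsupp.single_apply, h0, h1, h2])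
  · exact Or.inr <| Or.inl (by ext i; fin_cases i <;> simp [Finsupp.single_apply, h0, h1, h2])
  · exact Or.inr <| Or.inr <| Or.inl
      (by ext i; fin_cases i <;> simp [Finsupp.single_apply, h0, h1, h2])
  · exact Or.inr <| Or.inr <| Or.inr <| Or.inl
      (by ext i; fin_cases i <;> simp [Finsupp.single_apply, h0, h1, h2])
  · exact Or.inr <| Or.inr <| Or.inr <| Or.inr <| Or.inl
      (by ext i; fin_cases i <;> simp [Finsupp.single_apply, h0, h1, h2])
  · exact Or.inr <| Or.inr <| Or.inr <| Or.inr <| Or.inr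
      (by ext i; fin_cases i <;> simp [Finsupp.single_apply, h0, h1, h2])

lemma XX (i j : Fin 3) : (X i * X j : MvPolynomial (Fin 3) ℂ)
    = monomial (Finsupp.single i 1 + Finsupp.single j 1) 1 := by
  rw [X, X, monomial_mul, one_mul]

/-- Vanishing lemma: if `g ∈ ℂ[X,Y,Z]` is homogeneous of degree 2 and vanishes at every
point of the affine cone over the nodal cubic `C`, then `g = 0`. -/
theorem quadric_vanishing_on_nodal_cubic (g : MvPolynomial (Fin 3) ℂ)
    (hg : g.IsHomogeneous 2)
    (hvan : ∀ v : Fin 3 → ℂ, eval v F = 0 → eval v g = 0) :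
    g = 0 := by
  set a := coeff (Finsupp.single 0 2) g with ha'
  set b := coeff (Finsupp.single 1 2) g with hb'
  set c := coeff (Finsupp.single 2 2) g with hc'
  set d := coeff (Finsupp.single 0 1 + Finsupp.single 1 1) g with hd'
  set e := coeff (Finsupp.single 0 1 + Finsupp.single 2 1) g with he'
  set f := coeff (Finsupp.single 1 1 + Finsupp.single 2 1) g with hf'
  have hdecomp : g = C a * X 0 ^ 2 + C b * X 1 ^ 2 + C c * X 2 ^ 2
      + C d * (X 0 * X 1) + C e * (X 0 * X 2) + C f * (X 1 * X 2) := by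
    ext m
    by_cases h : m.degree = 2
    · rcases mem_six m h with rfl | rfl | rfl | rfl | rfl | rfl <;>
        simp [XX, coeff_monomial, coeff_X_pow, ha', hb', hc', hd', he', hf',
          Finsupp.ext_iff, Fin.forall_fin_succ, Finsupp.single_apply, Finsupp.add_apply]
    · have hn1 : Finsupp.single 0 2 ≠ m :=
        fun hh => h (by rw [← hh]; simp [degree_eq_sum3, Finsupp.single_apply])
      have hn2 : Finsupp.single 1 2 ≠ m :=
        fun hh => h (by rw [← hh]; simp [degree_eq_sum3, Finsupp.single_apply])
      have hn3 : Finsupp.single 2 2 ≠ m :=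
        fun hh => h (by rw [← hh]; simp [degree_eq_sum3, Finsupp.single_apply])
      have hn4 : Finsupp.single 0 1 + Finsupp.single 1 1 ≠ m :=
        fun hh => h (by rw [← hh]; simp [degree_eq_sum3, Finsupp.single_apply])
      have hn5 : Finsupp.single 0 1 + Finsupp.single 2 1 ≠ m :=
        fun hh => h (by rw [← hh]; simp [degree_eq_sum3, Finsupp.single_apply])
      have hn6 : Finsupp.single 1 1 + Finsupp.single 2 1 ≠ m :=
        fun hh => h (by rw [← hh]; simp [degree_eq_sum3, Finsupp.single_apply])
      rw [hg.coeff_eq_zero h]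
      simp [XX, coeff_monomial, coeff_X_pow, hn1, hn2, hn3, hn4, hn5, hn6]
  have hev : ∀ x y z : ℂ, y ^ 2 * z - x ^ 3 - x ^ 2 * z = 0 →
      a * x ^ 2 + b * y ^ 2 + c * z ^ 2 + d * (x * y) + e * (x * z) + f * (y * z) = 0 := by
    intro x y z hF
    have := hvan ![x, y, z] (by simp [F]; linear_combination hF)
    rw [hdecomp] at this
    simpa using this
  have E1 := hev 0 0 1 (by ring)
  have E2 := hev 0 1 0 (by ring)
  have E3 := hev (-1) 0 1 (by ring)
  have E4 := hev 3 6 1 (by ring)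
  have E5 := hev 3 (-6) 1 (by ring)
  have E6 := hev 8 24 1 (by ring)
  have hc0 : c = 0 := by linear_combination E1
  have hb0 : b = 0 := by linear_combination E2
  have ha0 : a = 0 := by
    linear_combination (1/24 : ℂ) * E4 + (1/24 : ℂ) * E5 - 3 * E2 - (1/3 : ℂ) * E1
      + (1/4 : ℂ) * E3
  have he0 : e = 0 := by linear_combination ha0 + E1 - E3
  have h36 : 36 * d + 12 * f = 0 := by linear_combination E4 - E5
  have h192 : 192 * d + 24 * f = 0 := by
    linear_combination E6 - 64 * ha0 - 576 * hb0 - E1 - 8 * he0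
  have hd0 : d = 0 := by linear_combination (1/120 : ℂ) * h192 - (1/60 : ℂ) * h36
  have hf0 : f = 0 := by linear_combination (1/12 : ℂ) * h36 - 3 * hd0
  rw [hdecomp, ha0, hb0, hc0, hd0, he0, hf0]
  simp
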